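/- Let R be a commutative ring, N an R-module, M = N[[X]], and let D, T, m : M → M be R[[X]]-linear maps satisfying: (i) D ∘ D = 0; (ii) T(M) ⊆ X·M; (iii) D ∘ T = T ∘ D; (iv) D(m(Q)) = T(Q) + Q + m(D(Q)) for all Q ∈ M. Then every D-closed element of M is D-exact: if D(Q) = 0 then Q = D(m(B(Q))), where B = Σ_{n≥0} (−1)^n T^n. In particular the homology ker(D)/im(D) is zero. -/
import Mathlib

/-- Multiplication by `X` on `N[[X]]`, modelled as sequences `ℕ → N`. -/
def shiftX (R N : Type*) [CommRing R] [AddCommGroup N] [Module R N] :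
    (ℕ → N) →ₗ[R] (ℕ → N) where
  toFun f := fun n => if n = 0 then 0 else f (n - 1)
  map_add' f g := by funext n; by_cases h : n = 0 <;> simp [h]
  map_smul' c f := by funext n; by_cases h : n = 0 <;> simp [h]

section Aux
variable {R N : Type*} [CommRing R] [AddCommGroup N] [Module R N]

lemma shiftX_pow_apply (k : ℕ) (h : ℕ → N) (j : ℕ) :
    ((shiftX R N ^ k) h) j = if j < k then 0 else h (j - k) := by
  induction k generalizing h j with
  | zero => simp
  | succ k ih =>
    have e : (shiftX R N ^ (k+1)) h = (shiftX R N ^ k) (shiftX R N h) := by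
      rw [pow_succ, Module.End.mul_apply]
    rw [e, ih]
    by_cases hj : j < k
    · rw [if_pos hj, if_pos (by omega : j < k + 1)]
    · have hx : (shiftX R N h) (j - k) = if j - k = 0 then 0 else h (j - k - 1) := rfl
      rw [if_neg hj, hx]
      by_cases hjk : j = k
      · simp [hjk]
      · have h1 : ¬ (j - k = 0) := by omega
        have h2 : ¬ (j < k + 1) := by omega
        rw [if_neg h1, if_neg h2, Nat.sub_sub]

lemma repr_of_vanish (k : ℕ) (g : ℕ → N) (hg : ∀ j < k, g j = 0) :
    g = (shiftX R N ^ k) (fun j => g (j + k)) := by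
  funext j
  rw [shiftX_pow_apply]
  by_cases hj : j < k
  · rw [if_pos hj]; exact hg j hj
  · rw [if_neg hj]; congr 1; omega

lemma comm_pow {L : (ℕ → N) →ₗ[R] (ℕ → N)} (hL : L ∘ₗ shiftX R N = shiftX R N ∘ₗ L)
    (k : ℕ) (h : ℕ → N) : L ((shiftX R N ^ k) h) = (shiftX R N ^ k) (L h) := by
  have hc : Commute L (shiftX R N) := by
    rw [Commute, SemiconjBy, Module.End.mul_eq_comp, Module.End.mul_eq_comp]; exact hL
  have hck := hc.pow_right k
  calc L ((shiftX R N ^ k) h) = (L * shiftX R N ^ k) h := rfl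
    _ = (shiftX R N ^ k * L) h := by rw [hck]
    _ = (shiftX R N ^ k) (L h) := rfl

lemma vanish_of_vanish {L : (ℕ → N) →ₗ[R] (ℕ → N)}
    (hL : L ∘ₗ shiftX R N = shiftX R N ∘ₗ L)
    (k : ℕ) (g : ℕ → N) (hg : ∀ j < k, g j = 0) : ∀ j < k, (L g) j = 0 := by
  intro j hj
  rw [repr_of_vanish (R := R) k g hg, comm_pow hL, shiftX_pow_apply, if_pos hj]

lemma Tpow_vanish {T : (ℕ → N) →ₗ[R] (ℕ → N)}
    (hTX : T ∘ₗ shiftX R N = shiftX R N ∘ₗ T)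
    (hT0 : ∀ f : ℕ → N, T f 0 = 0) (Q : ℕ → N) :
    ∀ n, ∀ j < n, ((T ^ n) Q) j = 0 := by
  intro n
  induction n with
  | zero => intro j hj; omega
  | succ n ih =>
    intro j hj
    have e : (T ^ (n+1)) Q = T ((T ^ n) Q) := by rw [pow_succ', Module.End.mul_apply]
    rw [e, repr_of_vanish (R := R) n _ ih, comm_pow hTX, shiftX_pow_apply]
    by_cases h : j < n
    · rw [if_pos h]
    · have hjn : j = n := by omega
      rw [if_neg h, hjn, Nat.sub_self]
      exact hT0 _

end Aux

/-- with `D, T, m : N[[X]] → N[[X]]` `R[[X]]`-linear, `D∘D = 0`,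
`T(M) ⊆ X·M`, `D∘T = T∘D`, and `D(m Q) = T Q + Q + m (D Q)`, every `D`-closed
element `Q` satisfies `Q = D (m (B Q))` with `B = Σ (−1)^n Tⁿ` (defined
coefficientwise); in particular every closed element is exact, i.e. the homology
`ker D / im D` vanishes. -/
theorem statement1 {R N : Type*} [CommRing R] [AddCommGroup N] [Module R N]
    (D T m : (ℕ → N) →ₗ[R] (ℕ → N))
    (hDX : D ∘ₗ shiftX R N = shiftX R N ∘ₗ D)
    (hTX : T ∘ₗ shiftX R N = shiftX R N ∘ₗ T)
    (hmX : m ∘ₗ shiftX R N = shiftX R N ∘ₗ m)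
    (hDD : D ∘ₗ D = 0)
    (hT0 : ∀ f : ℕ → N, T f 0 = 0)
    (hDT : D ∘ₗ T = T ∘ₗ D)
    (hbracket : ∀ Q : ℕ → N, D (m Q) = T Q + Q + m (D Q)) :
    (∀ Q : ℕ → N, D Q = 0 →
      Q = D (m (fun j => ∑ n ∈ Finset.range (j + 1), ((-1 : ℤ) ^ n) • ((T ^ n) Q j)))) ∧
    (∀ Q : ℕ → N, D Q = 0 → ∃ P : ℕ → N, D P = Q) := by
  have main : ∀ Q : ℕ → N, D Q = 0 →
      Q = D (m (fun j => ∑ n ∈ Finset.range (j + 1), ((-1 : ℤ) ^ n) • ((T ^ n) Q j))) := by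
    intro Q hQ
    set Bf : ℕ → N := fun j => ∑ n ∈ Finset.range (j + 1), ((-1 : ℤ) ^ n) • ((T ^ n) Q j)
      with hBf
    set S : ℕ → (ℕ → N) := fun J => ∑ n ∈ Finset.range (J + 1), ((-1 : ℤ) ^ n) • ((T ^ n) Q)
      with hS
    have hSapp : ∀ J j, S J j = ∑ n ∈ Finset.range (J + 1), ((-1 : ℤ) ^ n) • ((T ^ n) Q j) := by
      intro J j
      simp [hS, Finset.sum_apply]
    have hTvan := Tpow_vanish hTX hT0 Q
    -- Bf agrees with S J at coefficients ≤ J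
    have htail : ∀ J, ∀ j < J + 1, (Bf - S J) j = 0 := by
      intro J j hj
      have hsub : Finset.range (j + 1) ⊆ Finset.range (J + 1) := by
        apply Finset.range_subset_range.2; omega
      have hSB : S J j = Bf j := by
        rw [hSapp]
        refine (Finset.sum_subset hsub ?_).symm
        intro n hn hn2
        have hjn : j < n := by
          simp only [Finset.mem_range] at hn hn2; omega
        rw [hTvan n j hjn, smul_zero]
      simp [Pi.sub_apply, hSB]
    -- for any L commuting with shiftX, (L Bf) j = (L (S j)) j
    have hkey : ∀ (L : (ℕ → N) →ₗ[R] (ℕ → N)), L ∘ₗ shiftX R N = shiftX R N ∘ₗ L →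
        ∀ j, (L Bf) j = (L (S j)) j := by
      intro L hL j
      have h0 := vanish_of_vanish hL (j + 1) (Bf - S j) (htail j) j (by omega)
      rw [map_sub, Pi.sub_apply, sub_eq_zero] at h0
      exact h0
    -- commuting D with powers of T
    have hcT : Commute D T := by
      rw [Commute, SemiconjBy, Module.End.mul_eq_comp, Module.End.mul_eq_comp]; exact hDT
    have hDTpow : ∀ n (f : ℕ → N), D ((T ^ n) f) = (T ^ n) (D f) := by
      intro n f
      have hck := hcT.pow_right n
      calc D ((T ^ n) f) = (D * T ^ n) f := rfl
        _ = (T ^ n * D) f := by rw [hck]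
        _ = (T ^ n) (D f) := rfl
    -- D Bf = 0
    have hDBf : D Bf = 0 := by
      funext j
      rw [hkey D hDX j]
      have : D (S j) = 0 := by
        rw [hS]
        simp only [map_sum, map_zsmul]
        refine Finset.sum_eq_zero ?_
        intro n _
        rw [hDTpow n Q, hQ, map_zero, smul_zero]
      simp [this]
    -- T Bf = Q - Bf
    have hTBf : T Bf = Q - Bf := by
      funext j
      rw [Pi.sub_apply, hkey T hTX j]
      have hTS : T (S j) = ∑ n ∈ Finset.range (j + 1), ((-1 : ℤ) ^ n) • ((T ^ (n + 1)) Q) := by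
        rw [hS]
        simp only [map_sum, map_zsmul]
        refine Finset.sum_congr rfl ?_
        intro n _
        congr 1
        rw [pow_succ', Module.End.mul_apply]
      have hTSj : (T (S j)) j = ∑ n ∈ Finset.range (j + 1), ((-1 : ℤ) ^ n) • ((T ^ (n + 1)) Q j) := by
        rw [hTS]; simp [Finset.sum_apply]
      rw [hTSj]
      -- a n := (-1)^n • (T^n Q) j
      have hterm : ∀ n, ((-1 : ℤ) ^ n) • ((T ^ (n + 1)) Q j)
          = -(((-1 : ℤ) ^ (n + 1)) • ((T ^ (n + 1)) Q j)) := by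
        intro n
        rw [pow_succ (-1 : ℤ) n, mul_smul]
        simp
      have hsum : ∑ n ∈ Finset.range (j + 1), ((-1 : ℤ) ^ n) • ((T ^ (n + 1)) Q j)
          = -(∑ n ∈ Finset.range (j + 1), ((-1 : ℤ) ^ (n + 1)) • ((T ^ (n + 1)) Q j)) := by
        rw [← Finset.sum_neg_distrib]
        exact Finset.sum_congr rfl fun n _ => hterm n
      rw [hsum]
      have hshift : ∑ n ∈ Finset.range (j + 2), ((-1 : ℤ) ^ n) • ((T ^ n) Q j)
          = (∑ n ∈ Finset.range (j + 1), ((-1 : ℤ) ^ (n + 1)) • ((T ^ (n + 1)) Q j))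
            + ((-1 : ℤ) ^ 0) • ((T ^ 0) Q j) := by
        exact Finset.sum_range_succ' _ (j + 1)
      have htop : ∑ n ∈ Finset.range (j + 2), ((-1 : ℤ) ^ n) • ((T ^ n) Q j)
          = Bf j := by
        rw [Finset.sum_range_succ, hTvan (j + 1) j (by omega), smul_zero, add_zero]
      have h0 : ((-1 : ℤ) ^ 0) • ((T ^ 0) Q j) = Q j := by simp
      have : (∑ n ∈ Finset.range (j + 1), ((-1 : ℤ) ^ (n + 1)) • ((T ^ (n + 1)) Q j))
          = Bf j - Q j := by
        rw [← htop, hshift, h0]; abel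
      rw [this]; abel
    -- conclude
    rw [hbracket Bf, hDBf, map_zero, add_zero, hTBf]
    abel
  exact ⟨main, fun Q hQ => ⟨_, (main Q hQ).symm⟩⟩
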